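/- Let γ ∈ (-2, -1], b(v) = -2|v|^γ v (with b(0)=0), and φ_η(x) = (3/(4πη³)) 1_{|x|<η}. Then there is a constant C > 0 (depending only on γ) such that for all η ∈ (0,1) and all v ∈ ℝ³ \ {0}, |(b ⋆ φ_η)(v) − b(v)| ≤ C min{η, |v|} |v|^γ. -/

import Mathlib

open MeasureTheory

noncomputable section

/-- The Landau drift kernel `b(v) = -2 |v|^γ v` (with `b(0) = 0` since `γ < 0`). -/
def bKer (γ : ℝ) (v : EuclideanSpace ℝ (Fin 3)) : EuclideanSpace ℝ (Fin 3) :=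
  (-2 * ‖v‖ ^ γ) • v

/-- The uniform mollifier `φ_η(x) = (3/(4πη³)) 1_{|x|<η}`. -/
def phiMol (η : ℝ) (x : EuclideanSpace ℝ (Fin 3)) : ℝ :=
  if ‖x‖ < η then 3 / (4 * Real.pi * η ^ 3) else 0

/-- The convolution `(b ⋆ φ_η)(v)`. -/
def bConv (γ η : ℝ) (v : EuclideanSpace ℝ (Fin 3)) : EuclideanSpace ℝ (Fin 3) :=
  ∫ x, phiMol η x • bKer γ (v - x)

namespace Statement5Aux

open Metric

abbrev E3 := EuclideanSpace ℝ (Fin 3)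

lemma phiMol_eq (η : ℝ) :
    phiMol η = Set.indicator (ball (0:E3) η) (fun _ => 3 / (4 * Real.pi * η ^ 3)) := by
  funext x
  simp [phiMol, Set.indicator, mem_ball_zero_iff]

lemma phiMol_nonneg (η : ℝ) (x : E3) : 0 ≤ phiMol η x := by
  unfold phiMol
  split
  · have : (0:ℝ) < η := lt_of_le_of_lt (norm_nonneg x) (by assumption)
    positivity
  · exact le_refl 0

lemma measurable_phiMol (η : ℝ) : Measurable (phiMol η) := by
  rw [phiMol_eq]
  exact measurable_const.indicator measurableSet_ball

lemma integrable_phiMol {η : ℝ} : Integrable (phiMol η) := by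
  rw [phiMol_eq]
  rw [integrable_indicator_iff measurableSet_ball]
  exact integrableOn_const measure_ball_lt_top.ne

lemma gamma_52 : Real.Gamma ((3:ℝ)/2 + 1) = 3/4 * Real.sqrt Real.pi := by
  rw [Real.Gamma_add_one (by norm_num)]
  have : (3:ℝ)/2 = 1/2 + 1 := by norm_num
  rw [this, Real.Gamma_add_one (by norm_num), Real.Gamma_one_half_eq]
  ring

lemma vol_ball (η : ℝ) (hη : 0 ≤ η) :
    (volume (ball (0:E3) η)).toReal = 4/3 * Real.pi * η ^ 3 := by
  rw [EuclideanSpace.volume_ball]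
  rw [Fintype.card_fin]
  have h2 : Real.sqrt Real.pi ^ 3 / Real.Gamma ((3:ℝ)/2 + 1) = 4/3 * Real.pi := by
    rw [gamma_52]
    have hs : Real.sqrt Real.pi ^ 2 = Real.pi := Real.sq_sqrt Real.pi_pos.le
    have hs0 : Real.sqrt Real.pi ≠ 0 := by positivity
    have h3 : Real.sqrt Real.pi ^ 3 = Real.pi * Real.sqrt Real.pi := by
      rw [pow_succ, hs]
    rw [h3]
    field_simp
  rw [show ((3:ℕ):ℝ)/2 = (3:ℝ)/2 by norm_num] at *
  rw [h2]
  rw [ENNReal.toReal_mul, ENNReal.toReal_pow, ENNReal.toReal_ofReal hη,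
    ENNReal.toReal_ofReal (by positivity)]
  ring

lemma integral_phiMol {η : ℝ} (hη : 0 < η) : ∫ x, phiMol η x = 1 := by
  rw [phiMol_eq, integral_indicator_const _ measurableSet_ball, smul_eq_mul,
    measureReal_def, vol_ball η hη.le]
  field_simp

lemma rpow_sub_rpow_le {γ a b : ℝ} (hγ1 : -2 ≤ γ) (hγ2 : γ ≤ -1) (ha : 0 < a) (hab : a ≤ b) :
    a ^ γ - b ^ γ ≤ 2 * (b - a) * a ^ (γ - 1) := by
  have hb : 0 < b := lt_of_lt_of_le ha hab
  have hX : 0 < a ^ γ := Real.rpow_pos_of_pos ha γ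
  have hber : 1 + (-γ) * (a/b - 1) ≤ (a/b) ^ (-γ) := by
    have h := one_add_mul_self_le_rpow_one_add (s := a/b - 1)
      (by have := div_pos ha hb; linarith) (p := -γ) (by linarith)
    simpa using h
  have hts : (a/b) ^ (-γ) = b ^ γ / a ^ γ := by
    rw [Real.div_rpow ha.le hb.le, Real.rpow_neg ha.le, Real.rpow_neg hb.le]
    field_simp
  rw [hts] at hber
  have h2 : 1 - b ^ γ / a ^ γ ≤ (-γ) * (1 - a/b) := by nlinarith [hber]
  have hdb : 1 - a/b = (b-a)/b := by field_simp
  have h3 : (b-a)/b ≤ (b-a)/a := by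
    apply div_le_div_of_nonneg_left (by linarith) ha hab
  have h4 : 1 - b ^ γ / a ^ γ ≤ 2 * ((b-a)/a) := by
    have hnn : 0 ≤ (b-a)/b := div_nonneg (by linarith) hb.le
    nlinarith [h2, hdb, h3]
  have h5 := mul_le_mul_of_nonneg_left h4 hX.le
  have e1 : a ^ γ * (1 - b ^ γ / a ^ γ) = a ^ γ - b ^ γ := by field_simp
  have e2 : a ^ γ * (2 * ((b-a)/a)) = 2 * (b-a) * a ^ (γ-1) := by
    rw [Real.rpow_sub ha, Real.rpow_one]
    field_simp
  rw [e1, e2] at h5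
  exact h5

lemma norm_bKer (γ : ℝ) (v : E3) : ‖bKer γ v‖ = 2 * (‖v‖ ^ γ * ‖v‖) := by
  rw [bKer, norm_smul, Real.norm_eq_abs]
  have h : |(-2 : ℝ) * ‖v‖ ^ γ| = 2 * ‖v‖ ^ γ := by
    rw [abs_mul]
    rw [abs_of_nonneg (Real.rpow_nonneg (norm_nonneg v) γ)]
    norm_num
  rw [h, mul_assoc]

lemma bKer_lip {γ : ℝ} (hγ1 : -2 < γ) (hγ2 : γ ≤ -1) (y z : E3) :
    ‖bKer γ y - bKer γ z‖ ≤ 8 * ‖y - z‖ * (‖y‖ ^ γ + ‖z‖ ^ γ) := by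
  wlog hzy : ‖z‖ ≤ ‖y‖ with H
  · have := H hγ1 hγ2 z y (le_of_not_ge hzy)
    rw [norm_sub_rev, norm_sub_rev z y, add_comm (‖z‖ ^ γ)] at this
    exact this
  by_cases hz : z = 0
  · subst hz
    have h0 : bKer γ (0 : E3) = 0 := smul_zero _
    rw [h0, sub_zero, sub_zero, norm_bKer]
    have : ‖(0:E3)‖ ^ γ = 0 := by
      rw [norm_zero, Real.zero_rpow (by linarith)]
    rw [this]
    nlinarith [Real.rpow_nonneg (norm_nonneg y) γ, norm_nonneg y]
  · have hz0 : 0 < ‖z‖ := norm_pos_iff.2 hz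
    have hy0 : 0 < ‖y‖ := lt_of_lt_of_le hz0 hzy
    have hdec : bKer γ y - bKer γ z =
        (-2 * ‖y‖ ^ γ) • (y - z) + ((-2 * ‖y‖ ^ γ) - (-2 * ‖z‖ ^ γ)) • z := by
      rw [bKer, bKer]; module
    have hzyγ : ‖y‖ ^ γ ≤ ‖z‖ ^ γ :=
      Real.rpow_le_rpow_of_nonpos hz0 hzy (by linarith)
    have hkey : ‖z‖ ^ γ - ‖y‖ ^ γ ≤ 2 * (‖y‖ - ‖z‖) * ‖z‖ ^ (γ - 1) :=
      rpow_sub_rpow_le hγ1.le hγ2 hz0 hzy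
    have hnsub : ‖y‖ - ‖z‖ ≤ ‖y - z‖ := by
      have := abs_norm_sub_norm_le y z
      exact (abs_le.1 this).2.trans_eq rfl |>.trans (le_refl _) |>.trans (le_refl _)
    calc ‖bKer γ y - bKer γ z‖
        ≤ ‖(-2 * ‖y‖ ^ γ) • (y - z)‖ + ‖((-2 * ‖y‖ ^ γ) - (-2 * ‖z‖ ^ γ)) • z‖ := by
          rw [hdec]; exact norm_add_le _ _
      _ = 2 * ‖y‖ ^ γ * ‖y - z‖ + 2 * (‖z‖ ^ γ - ‖y‖ ^ γ) * ‖z‖ := by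
          rw [norm_smul, norm_smul, Real.norm_eq_abs, Real.norm_eq_abs]
          have h1 : |(-2 : ℝ) * ‖y‖ ^ γ| = 2 * ‖y‖ ^ γ := by
            rw [abs_mul, abs_of_nonneg (Real.rpow_nonneg (norm_nonneg y) γ)]; norm_num
          have h2 : |(-2 * ‖y‖ ^ γ) - (-2 * ‖z‖ ^ γ)| = 2 * (‖z‖ ^ γ - ‖y‖ ^ γ) := by
            rw [abs_of_nonneg (by linarith)]; ring
          rw [h1, h2]
      _ ≤ 8 * ‖y - z‖ * (‖y‖ ^ γ + ‖z‖ ^ γ) := by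
          have hrw : ‖z‖ ^ (γ - 1) * ‖z‖ = ‖z‖ ^ γ := by
            rw [← Real.rpow_add_one hz0.ne' (γ - 1)]; norm_num
          have hb1 : 2 * (‖z‖ ^ γ - ‖y‖ ^ γ) * ‖z‖ ≤ 4 * ‖y - z‖ * ‖z‖ ^ γ := by
            have step : (‖z‖ ^ γ - ‖y‖ ^ γ) * ‖z‖ ≤ 2 * ‖y - z‖ * (‖z‖ ^ (γ-1) * ‖z‖) := by
              have hKz : (0:ℝ) ≤ ‖z‖ ^ (γ-1) * ‖z‖ :=
                mul_nonneg (Real.rpow_nonneg hz0.le _) hz0.le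
              have s1 := mul_le_mul_of_nonneg_right hkey hz0.le
              have s2 := mul_le_mul_of_nonneg_right hnsub
                (by positivity : (0:ℝ) ≤ 2 * (‖z‖ ^ (γ-1) * ‖z‖))
              nlinarith [s1, s2]
            rw [hrw] at step
            linarith
          nlinarith [hb1, Real.rpow_nonneg (norm_nonneg y) γ,
            Real.rpow_nonneg (norm_nonneg z) γ, norm_nonneg (y - z), hzyγ]

lemma coord_le_norm (y : E3) (i : Fin 3) : |y i| ≤ ‖y‖ := by
  rw [EuclideanSpace.norm_eq]
  have h1 : |y i| ^ 2 ≤ ∑ j, |y j| ^ 2 :=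
    Finset.single_le_sum (f := fun j => |y j| ^ 2) (fun j _ => sq_nonneg _) (Finset.mem_univ i)
  calc |y i| = Real.sqrt (|y i| ^ 2) := (Real.sqrt_sq (abs_nonneg _)).symm
    _ ≤ _ := by
        apply Real.sqrt_le_sqrt
        simpa [Real.norm_eq_abs] using h1

lemma integrable_Iball {γ : ℝ} (hγ1 : -2 < γ) (hγ2 : γ ≤ -1) (R : ℝ) :
    Integrable (fun y : E3 => Set.indicator (ball (0:E3) R)
      (fun y => ‖y‖ ^ γ * ‖y‖) y) := by
  by_cases hR : 0 < R
  swap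
  · have : ball (0:E3) R = ∅ := ball_eq_empty.2 (not_lt.1 hR)
    simp [this]
  set p := γ + 1 with hp
  have hp1 : -1 < p := by simp [hp]; linarith
  have hp0 : p ≤ 0 := by simp [hp]; linarith
  set g0 : ℝ → ℝ := Set.indicator (Set.Ioc 0 R) (fun t => t ^ p) with hg0
  have hG0 : Integrable g0 := by
    rw [hg0, integrable_indicator_iff measurableSet_Ioc]
    exact (intervalIntegral.intervalIntegrable_rpow' hp1 (a := 0) (b := R)).1
  set gind : ℝ → ℝ := Set.indicator (Set.Icc (-R) R) (fun _ => 1) with hgind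
  have hGind : Integrable gind := by
    rw [hgind, integrable_indicator_iff measurableSet_Icc]
    exact integrableOn_const measure_Icc_lt_top.ne
  set gg : Fin 3 → ℝ → ℝ := ![fun t => g0 t + g0 (-t), gind, gind] with hgg
  have hggint : ∀ i, Integrable (gg i) := by
    intro i
    fin_cases i
    · simpa [hgg] using (hG0.add hG0.comp_neg : Integrable (fun t => g0 t + g0 (-t)))
    · simpa [hgg] using hGind
    · simpa [hgg] using hGind
  have hpi : Integrable (fun x : Fin 3 → ℝ => ∏ i, gg i (x i)) :=
    Integrable.fintype_prod hggint
  have hD : Integrable (fun y : E3 => ∏ i, gg i (y i)) := by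
    have he := EuclideanSpace.volume_preserving_symm_measurableEquiv_toLp (Fin 3)
    have := (he.integrable_comp_emb
      (MeasurableEquiv.toLp 2 (Fin 3 → ℝ)).symm.measurableEmbedding).2 hpi
    exact this
  have hg0nn : ∀ t, 0 ≤ g0 t := by
    intro t
    rw [hg0]
    apply Set.indicator_nonneg
    intro t ht
    exact Real.rpow_nonneg ht.1.le p
  have hgindnn : ∀ t, 0 ≤ gind t := by
    intro t
    rw [hgind]
    apply Set.indicator_nonneg
    intro t _
    norm_num
  have hnull : volume {y : E3 | y 0 = 0} = 0 := by
    have he := EuclideanSpace.volume_preserving_symm_measurableEquiv_toLp (Fin 3)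
    have hs : MeasurableSet {x : Fin 3 → ℝ | x 0 = 0} :=
      measurableSet_eq_fun (measurable_pi_apply 0) measurable_const
    have := he.measure_preimage hs.nullMeasurableSet
    have hEq : (MeasurableEquiv.toLp 2 (Fin 3 → ℝ)).symm ⁻¹' {x : Fin 3 → ℝ | x 0 = 0}
        = {y : E3 | y 0 = 0} := rfl
    rw [hEq] at this
    rw [this, volume_pi, Measure.pi_hyperplane]
  have hae : ∀ᵐ y : E3, y 0 ≠ 0 := by
    rw [ae_iff]
    simpa using hnull
  apply Integrable.mono' hD
  · apply Measurable.aestronglyMeasurable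
    exact (by fun_prop : Measurable fun y : E3 => ‖y‖ ^ γ * ‖y‖).indicator measurableSet_ball
  · filter_upwards [hae] with y hy0
    rw [Real.norm_eq_abs]
    by_cases hyR : y ∈ ball (0:E3) R
    · rw [Set.indicator_of_mem hyR]
      have hynorm : 0 < ‖y‖ := lt_of_lt_of_le (abs_pos.2 hy0) (coord_le_norm y 0)
      have hyball : ‖y‖ < R := by simpa [mem_ball_zero_iff] using hyR
      have heq : ‖y‖ ^ γ * ‖y‖ = ‖y‖ ^ p := (Real.rpow_add_one hynorm.ne' γ).symm
      rw [heq, abs_of_nonneg (Real.rpow_nonneg hynorm.le p)]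
      have habs : 0 < |y 0| := abs_pos.2 hy0
      have hle : ‖y‖ ^ p ≤ |y 0| ^ p :=
        Real.rpow_le_rpow_of_nonpos habs (coord_le_norm y 0) hp0
      have hfac0 : |y 0| ^ p ≤ gg 0 (y 0) := by
        have h0R : |y 0| ≤ R := le_of_lt (lt_of_le_of_lt (coord_le_norm y 0) hyball)
        simp only [hgg, Matrix.cons_val_zero]
        rcases lt_or_gt_of_ne hy0 with hneg | hpos
        · have : -(y 0) ∈ Set.Ioc 0 R := ⟨by linarith, by rw [abs_of_neg hneg] at h0R; linarith⟩
          have he1 : g0 (-(y 0)) = |y 0| ^ p := by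
            rw [hg0, Set.indicator_of_mem this, abs_of_neg hneg]
          linarith [hg0nn (y 0)]
        · have : y 0 ∈ Set.Ioc 0 R := ⟨hpos, by rwa [abs_of_pos hpos] at h0R⟩
          have he1 : g0 (y 0) = |y 0| ^ p := by
            rw [hg0, Set.indicator_of_mem this, abs_of_pos hpos]
          linarith [hg0nn (-(y 0))]
      have hmem : ∀ i : Fin 3, y i ∈ Set.Icc (-R) R := by
        intro i
        have := (abs_le.1 (le_of_lt (lt_of_le_of_lt (coord_le_norm y i) hyball)))
        exact ⟨this.1, this.2⟩
      have hfac1 : gg 1 (y 1) = 1 := by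
        simp only [hgg, Matrix.cons_val_one, Matrix.cons_val_zero, Matrix.head_cons, hgind]
        rw [Set.indicator_of_mem (hmem 1)]
      have hfac2 : gg 2 (y 2) = 1 := by
        simp only [hgg, Matrix.cons_val_two, Matrix.tail_cons, Matrix.head_cons, hgind]
        rw [Set.indicator_of_mem (hmem 2)]
      calc ‖y‖ ^ p ≤ |y 0| ^ p := hle
        _ ≤ gg 0 (y 0) * gg 1 (y 1) * gg 2 (y 2) := by
            rw [hfac1, hfac2]
            simpa using hfac0
        _ = ∏ i, gg i (y i) := by rw [Fin.prod_univ_three]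
    · rw [Set.indicator_of_notMem hyR]
      simp only [abs_zero]
      apply Finset.prod_nonneg
      intro i _
      fin_cases i
      · simpa [hgg] using add_nonneg (hg0nn (y 0)) (hg0nn (-(y 0)))
      · simpa [hgg] using hgindnn (y 1)
      · simpa [hgg] using hgindnn (y 2)

lemma integral_Iball {γ : ℝ} (hγ1 : -2 < γ) (hγ2 : γ ≤ -1) {R : ℝ} (hR : 0 < R) :
    ∫ y : E3, Set.indicator (ball (0:E3) R) (fun y => ‖y‖ ^ γ * ‖y‖) y
      = 4 * Real.pi * R ^ (γ+4) / (γ+4) := by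
  set f : ℝ → ℝ := Set.indicator (Set.Iio R) (fun r => r ^ γ * r) with hf
  have hfy : (fun y : E3 => Set.indicator (ball (0:E3) R) (fun y => ‖y‖ ^ γ * ‖y‖) y)
      = fun y : E3 => f ‖y‖ := by
    funext y
    by_cases h : ‖y‖ < R
    · rw [Set.indicator_of_mem (mem_ball_zero_iff.2 h), hf,
        Set.indicator_of_mem (Set.mem_Iio.2 h)]
    · rw [Set.indicator_of_notMem (fun hc => h (mem_ball_zero_iff.1 hc)), hf,
        Set.indicator_of_notMem (fun hc => h (Set.mem_Iio.1 hc))]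
  have hdim : Module.finrank ℝ E3 = 3 := by simp [finrank_euclideanSpace]
  calc ∫ y : E3, Set.indicator (ball (0:E3) R) (fun y => ‖y‖ ^ γ * ‖y‖) y
      = ∫ y : E3, f ‖y‖ := by rw [hfy]
    _ = Module.finrank ℝ E3 • (volume (ball (0:E3) 1)).toReal
          • ∫ y in Set.Ioi (0:ℝ), y ^ (Module.finrank ℝ E3 - 1) • f y :=
        integral_fun_norm_addHaar volume f
    _ = 4 * Real.pi * R ^ (γ+4) / (γ+4) := by
        rw [hdim]
        have h1 : ∫ y in Set.Ioi (0:ℝ), y ^ (3 - 1 : ℕ) • f y = R ^ (γ+4) / (γ+4) := by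
          have e1 : ∀ y : ℝ, y ^ (3 - 1 : ℕ) • f y
              = Set.indicator (Set.Iio R) (fun r => r ^ (2:ℕ) * (r ^ γ * r)) y := by
            intro y
            rw [hf]
            by_cases h : y ∈ Set.Iio R
            · rw [Set.indicator_of_mem h, Set.indicator_of_mem h, smul_eq_mul]
            · rw [Set.indicator_of_notMem h, Set.indicator_of_notMem h, smul_eq_mul, mul_zero]
          simp_rw [e1]
          rw [setIntegral_indicator measurableSet_Iio, Set.Ioi_inter_Iio]
          have e2 : Set.EqOn (fun x : ℝ => x ^ (2:ℕ) * (x ^ γ * x)) (fun x : ℝ => x ^ (γ+3))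
              (Set.Ioo (0:ℝ) R) := by
            intro x hx
            simp only
            rw [← Real.rpow_natCast x 2, ← Real.rpow_add_one (ne_of_gt hx.1) γ,
              ← Real.rpow_add hx.1]
            norm_num
            congr 1
            ring
          rw [setIntegral_congr_fun measurableSet_Ioo e2,
            ← integral_Ioc_eq_integral_Ioo, ← intervalIntegral.integral_of_le hR.le,
            integral_rpow (Or.inl (by linarith))]
          have e3 : γ + 3 + 1 = γ + 4 := by ring
          rw [e3, Real.zero_rpow (by linarith : γ + 4 ≠ 0)]
          ring
        rw [h1, vol_ball 1 (by norm_num)]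
        simp only [nsmul_eq_mul, smul_eq_mul]
        ring

lemma phi_bKer_bound {γ η : ℝ} (hη0 : 0 < η) (v : E3) {R : ℝ}
    (hsupp : ∀ x : E3, ‖x‖ < η → ‖v - x‖ < R) (x : E3) :
    ‖phiMol η x • bKer γ (v - x)‖ ≤ (3/(4*Real.pi*η^3) * 2) *
      Set.indicator (ball (0:E3) R) (fun y => ‖y‖ ^ γ * ‖y‖) (v - x) := by
  rw [norm_smul, Real.norm_eq_abs, abs_of_nonneg (phiMol_nonneg η x), norm_bKer]
  by_cases hx : ‖x‖ < η
  · have hmem : v - x ∈ ball (0:E3) R := mem_ball_zero_iff.2 (hsupp x hx)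
    rw [Set.indicator_of_mem hmem]
    have hphi : phiMol η x = 3/(4*Real.pi*η^3) := if_pos hx
    rw [hphi]
    exact le_of_eq (by ring)
  · have hphi : phiMol η x = 0 := if_neg hx
    rw [hphi, zero_mul]
    have hnn : 0 ≤ Set.indicator (ball (0:E3) R) (fun y => ‖y‖ ^ γ * ‖y‖) (v - x) :=
      Set.indicator_nonneg (fun y _ =>
        mul_nonneg (Real.rpow_nonneg (norm_nonneg y) γ) (norm_nonneg y)) _
    positivity

lemma measurable_phi_bKer (γ η : ℝ) (v : E3) :
    AEStronglyMeasurable (fun x : E3 => phiMol η x • bKer γ (v - x)) volume := by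
  apply Measurable.aestronglyMeasurable
  apply (measurable_phiMol η).smul
  have hb : Measurable (bKer γ) := by
    unfold bKer
    fun_prop
  exact hb.comp (measurable_const.sub measurable_id)

lemma integrable_phi_bKer {γ : ℝ} (hγ1 : -2 < γ) (hγ2 : γ ≤ -1) {η : ℝ} (hη0 : 0 < η)
    (v : E3) {R : ℝ} (hsupp : ∀ x : E3, ‖x‖ < η → ‖v - x‖ < R) :
    Integrable (fun x : E3 => phiMol η x • bKer γ (v - x)) := by
  apply Integrable.mono' (g := fun x : E3 => (3/(4*Real.pi*η^3) * 2) *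
      Set.indicator (ball (0:E3) R) (fun y => ‖y‖ ^ γ * ‖y‖) (v - x))
  · exact ((integrable_comp_sub_left
      (fun y : E3 => Set.indicator (ball (0:E3) R) (fun y => ‖y‖ ^ γ * ‖y‖) y) v).2
      (integrable_Iball hγ1 hγ2 R)).const_mul _
  · exact measurable_phi_bKer γ η v
  · exact Filter.Eventually.of_forall (phi_bKer_bound hη0 v hsupp)

end Statement5Aux

open Statement5Aux Metric

/-- for `γ ∈ (-2,-1]` there is `C > 0` (depending only on `γ`) such that for
all `η ∈ (0,1)` and all `v ∈ ℝ³ \ {0}`,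
`|(b ⋆ φ_η)(v) − b(v)| ≤ C min{η, |v|} |v|^γ`. -/
theorem statement5 (γ : ℝ) (hγ : γ ∈ Set.Ioc (-2 : ℝ) (-1)) :
    ∃ C : ℝ, 0 < C ∧ ∀ η ∈ Set.Ioo (0 : ℝ) 1, ∀ v : EuclideanSpace ℝ (Fin 3), v ≠ 0 →
      ‖bConv γ η v - bKer γ v‖ ≤ C * min η ‖v‖ * ‖v‖ ^ γ := by
  obtain ⟨hγ1, hγ2⟩ := hγ
  refine ⟨1000, by norm_num, ?_⟩
  rintro η ⟨hη0, hη1⟩ v hv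
  have hv0 : 0 < ‖v‖ := norm_pos_iff.2 hv
  have hvγ : 0 < ‖v‖ ^ γ := Real.rpow_pos_of_pos hv0 γ
  have hmin : 0 < min η ‖v‖ := lt_min hη0 hv0
  by_cases hcase : 2 * η < ‖v‖
  · -- large |v|
    have hmin_eq : min η ‖v‖ = η := min_eq_left (by linarith)
    have hsupp : ∀ x : E3, ‖x‖ < η → ‖v - x‖ < ‖v‖ + η := by
      intro x hx
      calc ‖v - x‖ ≤ ‖v‖ + ‖x‖ := norm_sub_le v x
        _ < ‖v‖ + η := by linarith
    have hInt1 : Integrable (fun x : E3 => phiMol η x • bKer γ (v - x)) :=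
      integrable_phi_bKer hγ1 hγ2 hη0 v hsupp
    have hInt2 : Integrable (fun x : E3 => phiMol η x • bKer γ v) :=
      integrable_phiMol.smul_const _
    have hsub : bConv γ η v - bKer γ v
        = ∫ x, phiMol η x • (bKer γ (v - x) - bKer γ v) := by
      have h1 : ∫ x, phiMol η x • (bKer γ (v - x) - bKer γ v)
          = (∫ x, phiMol η x • bKer γ (v - x)) - ∫ x, phiMol η x • bKer γ v := by
        simp_rw [smul_sub]
        exact integral_sub hInt1 hInt2
      rw [bConv, h1, integral_smul_const, integral_phiMol hη0, one_smul]
    rw [hsub]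
    have hbound : ∀ x : E3, ‖phiMol η x • (bKer γ (v - x) - bKer γ v)‖
        ≤ phiMol η x * (40 * η * ‖v‖ ^ γ) := by
      intro x
      rw [norm_smul, Real.norm_eq_abs, abs_of_nonneg (phiMol_nonneg η x)]
      by_cases hx : ‖x‖ < η
      · apply mul_le_mul_of_nonneg_left _ (phiMol_nonneg η x)
        have hlip := bKer_lip hγ1 hγ2 (v - x) v
        have hyz : (v - x) - v = -x := by abel
        rw [hyz, norm_neg] at hlip
        have hlow : ‖v‖/2 ≤ ‖v - x‖ := by
          have := norm_sub_norm_le v x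
          have h2 : ‖v‖ - ‖x‖ ≤ ‖v - x‖ := by
            calc ‖v‖ - ‖x‖ ≤ |‖v‖ - ‖x‖| := le_abs_self _
              _ ≤ ‖v - x‖ := abs_norm_sub_norm_le v x
          linarith
        have hvx4 : ‖v - x‖ ^ γ ≤ 4 * ‖v‖ ^ γ := by
          have ha : ‖v - x‖ ^ γ ≤ (‖v‖/2) ^ γ :=
            Real.rpow_le_rpow_of_nonpos (half_pos hv0) hlow (by linarith)
          have hb : (‖v‖/2) ^ γ = ‖v‖ ^ γ / 2 ^ γ :=
            Real.div_rpow hv0.le (by norm_num : (0:ℝ) ≤ 2) γ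
          have h24 : (1:ℝ)/4 ≤ (2:ℝ) ^ γ := by
            have hm : (2:ℝ) ^ (-2:ℝ) ≤ (2:ℝ) ^ γ :=
              Real.rpow_le_rpow_of_exponent_le (by norm_num) (by linarith)
            have he : (2:ℝ) ^ (-2:ℝ) = 1/4 := by
              rw [show (-2:ℝ) = ((-2:ℤ):ℝ) by norm_num, Real.rpow_intCast]
              norm_num
            rw [he] at hm
            exact hm
          have hc2 : ‖v‖ ^ γ / 2 ^ γ ≤ ‖v‖ ^ γ / (1/4) :=
            div_le_div_of_nonneg_left hvγ.le (by norm_num) h24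
          have hd : ‖v‖ ^ γ / (1/4) = 4 * ‖v‖ ^ γ := by ring
          linarith
        calc ‖bKer γ (v - x) - bKer γ v‖ ≤ 8 * ‖x‖ * (‖v - x‖ ^ γ + ‖v‖ ^ γ) := hlip
          _ ≤ 8 * η * (5 * ‖v‖ ^ γ) := by
              have hnx : 0 ≤ ‖x‖ := norm_nonneg x
              have hsum : ‖v - x‖ ^ γ + ‖v‖ ^ γ ≤ 5 * ‖v‖ ^ γ := by linarith
              have hsnn : 0 ≤ ‖v - x‖ ^ γ + ‖v‖ ^ γ := by positivity
              nlinarith [hvγ]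
          _ = 40 * η * ‖v‖ ^ γ := by ring
      · have hphi : phiMol η x = 0 := if_neg hx
        rw [hphi, zero_mul, zero_mul]
    have hgint : Integrable (fun x : E3 => phiMol η x * (40 * η * ‖v‖ ^ γ)) :=
      integrable_phiMol.mul_const _
    calc ‖∫ x, phiMol η x • (bKer γ (v - x) - bKer γ v)‖
        ≤ ∫ x, phiMol η x * (40 * η * ‖v‖ ^ γ) :=
          norm_integral_le_of_norm_le hgint (Filter.Eventually.of_forall hbound)
      _ = (∫ x, phiMol η x) * (40 * η * ‖v‖ ^ γ) := integral_mul_const _ _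
      _ = 40 * η * ‖v‖ ^ γ := by rw [integral_phiMol hη0, one_mul]
      _ ≤ 1000 * min η ‖v‖ * ‖v‖ ^ γ := by
          rw [hmin_eq]
          nlinarith [hvγ, hη0]
  · -- small |v| : ‖v‖ ≤ 2η
    push_neg at hcase
    have h2min : ‖v‖ ≤ 2 * min η ‖v‖ := by
      rcases le_total η ‖v‖ with h | h
      · rw [min_eq_left h]; linarith
      · rw [min_eq_right h]; linarith
    have hsupp : ∀ x : E3, ‖x‖ < η → ‖v - x‖ < 3 * η := by
      intro x hx
      calc ‖v - x‖ ≤ ‖v‖ + ‖x‖ := norm_sub_le v x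
        _ < 3 * η := by linarith
    have hR3 : (0:ℝ) < 3 * η := by linarith
    have hdomint : Integrable (fun x : E3 => (3/(4*Real.pi*η^3) * 2) *
        Set.indicator (ball (0:E3) (3*η)) (fun y => ‖y‖ ^ γ * ‖y‖) (v - x)) :=
      ((integrable_comp_sub_left
        (fun y : E3 => Set.indicator (ball (0:E3) (3*η)) (fun y => ‖y‖ ^ γ * ‖y‖) y) v).2
        (integrable_Iball hγ1 hγ2 (3*η))).const_mul _
    have hA1 : ‖bConv γ η v‖ ≤ (3/(4*Real.pi*η^3) * 2) *
        (4 * Real.pi * (3*η) ^ (γ+4) / (γ+4)) := by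
      rw [bConv]
      calc ‖∫ x, phiMol η x • bKer γ (v - x)‖
          ≤ ∫ x, (3/(4*Real.pi*η^3) * 2) *
              Set.indicator (ball (0:E3) (3*η)) (fun y => ‖y‖ ^ γ * ‖y‖) (v - x) :=
            norm_integral_le_of_norm_le hdomint
              (Filter.Eventually.of_forall (phi_bKer_bound hη0 v hsupp))
        _ = (3/(4*Real.pi*η^3) * 2) *
              ∫ x : E3, Set.indicator (ball (0:E3) (3*η)) (fun y => ‖y‖ ^ γ * ‖y‖) (v - x) :=
            integral_const_mul _ _
        _ = (3/(4*Real.pi*η^3) * 2) * (4 * Real.pi * (3*η) ^ (γ+4) / (γ+4)) := by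
            rw [integral_sub_left_eq_self
              (fun y : E3 => Set.indicator (ball (0:E3) (3*η)) (fun y => ‖y‖ ^ γ * ‖y‖) y)
              volume v]
            rw [integral_Iball hγ1 hγ2 hR3]
    have hA2 : (3/(4*Real.pi*η^3) * 2) * (4 * Real.pi * (3*η) ^ (γ+4) / (γ+4))
        ≤ 81 * η ^ (γ+1) := by
      have hK27 : (3:ℝ) ^ (γ+4) ≤ 27 := by
        have := Real.rpow_le_rpow_of_exponent_le (by norm_num : (1:ℝ) ≤ 3)
          (by linarith : γ + 4 ≤ 3)
        have h33 : (3:ℝ) ^ (3:ℝ) = 27 := by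
          rw [show (3:ℝ) = ((3:ℕ):ℝ) by norm_num, Real.rpow_natCast]
          norm_num
        rw [← h33]
        exact this
      have hK0 : (0:ℝ) ≤ (3:ℝ) ^ (γ+4) := Real.rpow_nonneg (by norm_num) _
      have hP : 0 < η ^ (γ+1) := Real.rpow_pos_of_pos hη0 _
      have he : (3/(4*Real.pi*η^3) * 2) * (4 * Real.pi * (3*η) ^ (γ+4) / (γ+4))
          = 6 * (3:ℝ) ^ (γ+4) * η ^ (γ+1) / (γ+4) := by
        rw [Real.mul_rpow (by norm_num) hη0.le]
        rw [show γ + 4 = (γ+1) + 3 by ring] 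
        rw [Real.rpow_add hη0 (γ+1) 3]
        rw [show η ^ (3:ℝ) = η ^ (3:ℕ) from Real.rpow_natCast η 3]
        have hπ : Real.pi ≠ 0 := Real.pi_ne_zero
        have hη : η ≠ 0 := hη0.ne'
        have hγ4 : γ + 1 + 3 ≠ 0 := by intro h; nlinarith
        field_simp
        ring
      rw [he]
      rw [div_le_iff₀ (by linarith : (0:ℝ) < γ + 4)]
      have hKP := mul_le_mul_of_nonneg_right hK27 hP.le
      nlinarith [hP, hKP]
    have hB : η ^ (γ+1) ≤ 2 * (‖v‖ ^ γ * ‖v‖) := by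
      have t1 : η ^ (γ+1) ≤ (‖v‖/2) ^ (γ+1) :=
        Real.rpow_le_rpow_of_nonpos (half_pos hv0) (by linarith) (by linarith)
      have t2 : (‖v‖/2) ^ (γ+1) = ‖v‖ ^ (γ+1) / 2 ^ (γ+1) :=
        Real.div_rpow hv0.le (by norm_num : (0:ℝ) ≤ 2) (γ+1)
      have t3 : (1:ℝ)/2 ≤ (2:ℝ) ^ (γ+1) := by
        have hm : (2:ℝ) ^ (-1:ℝ) ≤ (2:ℝ) ^ (γ+1) :=
          Real.rpow_le_rpow_of_exponent_le (by norm_num) (by linarith)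
        have he : (2:ℝ) ^ (-1:ℝ) = 1/2 := by
          rw [show (-1:ℝ) = ((-1:ℤ):ℝ) by norm_num, Real.rpow_intCast]
          norm_num
        rw [he] at hm
        exact hm
      have t4 : ‖v‖ ^ (γ+1) / 2 ^ (γ+1) ≤ ‖v‖ ^ (γ+1) / (1/2) :=
        div_le_div_of_nonneg_left (Real.rpow_nonneg hv0.le _) (by norm_num) t3
      have t5 : ‖v‖ ^ (γ+1) / (1/2) = 2 * ‖v‖ ^ (γ+1) := by ring
      have t6 : ‖v‖ ^ (γ+1) = ‖v‖ ^ γ * ‖v‖ := Real.rpow_add_one hv0.ne' γ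
      rw [t2] at t1
      rw [t6] at t1 t4 t5
      linarith
    have hC : ‖bKer γ v‖ = 2 * (‖v‖ ^ γ * ‖v‖) := norm_bKer γ v
    have htri : ‖bConv γ η v - bKer γ v‖ ≤ ‖bConv γ η v‖ + ‖bKer γ v‖ := norm_sub_le _ _
    have hfin : ‖v‖ ^ γ * ‖v‖ ≤ ‖v‖ ^ γ * (2 * min η ‖v‖) :=
      mul_le_mul_of_nonneg_left h2min hvγ.le
    calc ‖bConv γ η v - bKer γ v‖ ≤ ‖bConv γ η v‖ + ‖bKer γ v‖ := htri
      _ ≤ 81 * η ^ (γ+1) + 2 * (‖v‖ ^ γ * ‖v‖) := by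
          rw [hC]
          linarith [hA1.trans hA2]
      _ ≤ 164 * (‖v‖ ^ γ * ‖v‖) := by linarith [hB]
      _ ≤ 1000 * min η ‖v‖ * ‖v‖ ^ γ := by nlinarith [hfin, hvγ, hmin]
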